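/- Let q ≠ 1 and suppose F is differentiable at x with 1+(1-q)x > 0. Then the limit as y → x of (F(x) - F(y))/(ln E_q(x) - ln E_q(y)), where E_q(t) = |1+(1-q)t|^{1/(1-q)}, equals (1+(1-q)x)·F'(x). -/

import Mathlib

/-- `E_q(t) = |1+(1-q)t|^{1/(1-q)}` -/
noncomputable def Eq' (q t : ℝ) : ℝ := |1 + (1 - q) * t| ^ (1 / (1 - q))

theorem primal_q_deriv_eq (q x f' : ℝ) (F : ℝ → ℝ) (hq : q ≠ 1)
    (hF : HasDerivAt F f' x) (hx : 0 < 1 + (1 - q) * x) :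
    Filter.Tendsto (fun y => (F x - F y) / (Real.log (Eq' q x) - Real.log (Eq' q y)))
      (nhdsWithin x {x}ᶜ) (nhds ((1 + (1 - q) * x) * f')) := by
  have hq1 : (1 : ℝ) - q ≠ 0 := sub_ne_zero.mpr (Ne.symm hq)
  set L : ℝ → ℝ := fun y => Real.log (Eq' q y) with hL
  set G : ℝ → ℝ := fun y => (1 / (1 - q)) * Real.log (1 + (1 - q) * y) with hG
  have hpos : ∀ᶠ y in nhds x, 0 < 1 + (1 - q) * y := by
    have hc : Continuous fun y : ℝ => 1 + (1 - q) * y := by continuity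
    exact (continuousAt_const (y := (0:ℝ))).eventually_lt (hc.continuousAt (x := x)) hx
  have hLG : L =ᶠ[nhds x] G := by
    filter_upwards [hpos] with y hy
    simp only [hL, hG, Eq']
    rw [abs_of_pos hy, Real.log_rpow hy]
  have hGx : HasDerivAt G (1 + (1 - q) * x)⁻¹ x := by
    have h1 : HasDerivAt (fun y : ℝ => 1 + (1 - q) * y) (1 - q) x := by
      simpa using ((hasDerivAt_id x).const_mul (1 - q)).const_add 1
    have h2 := (h1.log hx.ne').const_mul (1 / (1 - q))
    refine h2.congr_deriv ?_
    field_simp [hx.ne']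
  have hLx : HasDerivAt L (1 + (1 - q) * x)⁻¹ x := hGx.congr_of_eventuallyEq hLG
  have hFs := hasDerivAt_iff_tendsto_slope.mp hF
  have hLs := hasDerivAt_iff_tendsto_slope.mp hLx
  have hne : ((1 + (1 - q) * x)⁻¹ : ℝ) ≠ 0 := inv_ne_zero hx.ne'
  have htend := hFs.div hLs hne
  have heq : (fun y => slope F x y / slope L x y) =ᶠ[nhdsWithin x {x}ᶜ]
      fun y => (F x - F y) / (L x - L y) := by
    filter_upwards [self_mem_nhdsWithin] with y hy
    have hyx : y - x ≠ 0 := sub_ne_zero.mpr hy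
    simp only [slope_def_field]
    by_cases hb : L y - L x = 0
    · rw [hb, zero_div, div_zero, show L x - L y = 0 by linarith, div_zero]
    · have hb' : L x - L y ≠ 0 := fun h => hb (by linarith)
      field_simp; ring
  have hval : (1 + (1 - q) * x) * f' = f' / (1 + (1 - q) * x)⁻¹ := by
    field_simp
  rw [hval]
  exact htend.congr' heq
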